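/- Let k ≥ 2 be an integer and set t = log₂(2k+2). Then for all real numbers x, y ≥ 0 one has x^t + y^t + 2k·x^{t/2}·y^{t/2} ≤ (x+y)^t. -/

import Mathlib

open scoped BigOperators

private lemma kt_bern (q : ℝ) (hq : 1 ≤ q) (u : ℝ) :
    Real.exp (q*u) + q * Real.exp ((q-2)*u) ≤ (Real.exp u + Real.exp (-u)) ^ q := by
  have h1 : Real.exp u + Real.exp (-u) = Real.exp u * (1 + Real.exp (-(2*u))) := by
    rw [mul_add, mul_one, ← Real.exp_add]
    ring_nf
  have hbern : 1 + q * Real.exp (-(2*u)) ≤ (1 + Real.exp (-(2*u))) ^ q :=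
    one_add_mul_self_le_rpow_one_add (by linarith [(Real.exp_pos (-(2*u))).le]) hq
  have hmul : (Real.exp u + Real.exp (-u)) ^ q
      = Real.exp u ^ q * (1 + Real.exp (-(2*u))) ^ q := by
    rw [h1, Real.mul_rpow (Real.exp_pos u).le (by positivity)]
  rw [hmul]
  have h2 : Real.exp u ^ q * (1 + q * Real.exp (-(2*u)))
      ≤ Real.exp u ^ q * (1 + Real.exp (-(2*u))) ^ q :=
    mul_le_mul_of_nonneg_left hbern (by positivity)
  refine le_trans (le_of_eq ?_) h2
  rw [← Real.exp_mul, mul_add, mul_one, ← mul_assoc, mul_comm (Real.exp (u*q)) q, mul_assoc,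
    ← Real.exp_add, show (q-2)*u = u*q + -(2*u) from by ring, mul_comm u q]

private lemma kt_key (t : ℝ) (ht : 2 ≤ t) (u : ℝ) (hu : 0 ≤ u) :
    Real.exp (t*u) - Real.exp (-(t*u))
      ≤ (Real.exp u - Real.exp (-u)) * (Real.exp u + Real.exp (-u)) ^ (t-1) := by
  have hb := kt_bern (t-1) (by linarith) u
  have hs : 0 ≤ Real.exp u - Real.exp (-u) := by
    have : Real.exp (-u) ≤ Real.exp u := Real.exp_le_exp.mpr (by linarith)
    linarith
  have h2 : (Real.exp u - Real.exp (-u)) * (Real.exp ((t-1)*u) + (t-1) * Real.exp ((t-1-2)*u))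
      ≤ (Real.exp u - Real.exp (-u)) * (Real.exp u + Real.exp (-u)) ^ (t-1) :=
    mul_le_mul_of_nonneg_left hb hs
  have e1 : Real.exp u * Real.exp ((t-1)*u) = Real.exp (t*u) := by
    rw [← Real.exp_add]; congr 1; ring
  have e2 : Real.exp (-u) * Real.exp ((t-1)*u) = Real.exp ((t-2)*u) := by
    rw [← Real.exp_add]; congr 1; ring
  have e3 : Real.exp u * Real.exp ((t-1-2)*u) = Real.exp ((t-2)*u) := by
    rw [← Real.exp_add]; congr 1; ring
  have e4 : Real.exp (-u) * Real.exp ((t-1-2)*u) = Real.exp ((t-4)*u) := by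
    rw [← Real.exp_add]; congr 1; ring
  have expand : (Real.exp u - Real.exp (-u)) * (Real.exp ((t-1)*u) + (t-1) * Real.exp ((t-1-2)*u))
      = Real.exp (t*u) + (t-2) * Real.exp ((t-2)*u) - (t-1) * Real.exp ((t-4)*u) := by
    linear_combination e1 - e2 + (t-1)*e3 - (t-1)*e4
  -- weighted AM-GM
  have hamgm : (t-1) * Real.exp ((t-4)*u) ≤ (t-2) * Real.exp ((t-2)*u) + Real.exp (-(t*u)) := by
    rcases eq_or_lt_of_le ht with h | h
    · have harg : (t-4)*u = -(t*u) := by rw [← h]; ring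
      rw [harg, ← h]
      norm_num
    · have ht1 : (0:ℝ) < t - 1 := by linarith
      have ht2 : (0:ℝ) ≤ t - 2 := by linarith
      have hw : (t-2)/(t-1) + 1/(t-1) = 1 := by
        rw [← add_div, div_eq_one_iff_eq ht1.ne']
        ring
      have hg := Real.geom_mean_le_arith_mean2_weighted
        (by positivity : (0:ℝ) ≤ (t-2)/(t-1)) (by positivity : (0:ℝ) ≤ 1/(t-1))
        (Real.exp_pos ((t-2)*u)).le (Real.exp_pos (-(t*u))).le hw
      have hgeo : Real.exp ((t-2)*u) ^ ((t-2)/(t-1)) * Real.exp (-(t*u)) ^ (1/(t-1))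
          = Real.exp ((t-4)*u) := by
        rw [← Real.exp_mul, ← Real.exp_mul, ← Real.exp_add]
        congr 1
        field_simp
        ring_nf
      rw [hgeo] at hg
      have := mul_le_mul_of_nonneg_left hg ht1.le
      calc (t-1) * Real.exp ((t-4)*u)
          ≤ (t-1) * ((t-2)/(t-1) * Real.exp ((t-2)*u) + 1/(t-1) * Real.exp (-(t*u))) := this
        _ = (t-2) * Real.exp ((t-2)*u) + Real.exp (-(t*u)) := by
            field_simp
  linarith [h2, expand.symm.le]

private lemma kt_cosh (t : ℝ) (ht : 2 ≤ t) (u : ℝ) (hu : 0 ≤ u) :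
    Real.exp (t*u) + Real.exp (-(t*u)) + ((2:ℝ) ^ t - 2)
      ≤ (Real.exp u + Real.exp (-u)) ^ t := by
  set g : ℝ → ℝ := fun v =>
    (Real.exp v + Real.exp (-v)) ^ t - Real.exp (t*v) - Real.exp (-(t*v)) with hg
  have hderiv : ∀ v : ℝ, HasDerivAt g
      ((Real.exp v - Real.exp (-v)) * t * (Real.exp v + Real.exp (-v)) ^ (t-1)
        - Real.exp (t*v) * t - Real.exp (-(t*v)) * (-t)) v := by
    intro v
    have hc : HasDerivAt (fun w => Real.exp w + Real.exp (-w))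
        (Real.exp v - Real.exp (-v)) v := by
      have h1 : HasDerivAt (fun w : ℝ => Real.exp w) (Real.exp v) v := Real.hasDerivAt_exp v
      have h2 : HasDerivAt (fun w : ℝ => Real.exp (-w)) (Real.exp (-v) * (-1)) v :=
        ((hasDerivAt_id v).neg).exp
      exact (h1.add h2).congr_deriv (by ring)
    have hpos : Real.exp v + Real.exp (-v) ≠ 0 := by positivity
    have h3 : HasDerivAt (fun w => (Real.exp w + Real.exp (-w)) ^ t)
        ((Real.exp v - Real.exp (-v)) * t * (Real.exp v + Real.exp (-v)) ^ (t-1)) v :=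
      hc.rpow_const (Or.inl hpos)
    have h4 : HasDerivAt (fun w => Real.exp (t*w)) (Real.exp (t*v) * t) v := by
      have : HasDerivAt (fun w : ℝ => t * w) (t * 1) v := (hasDerivAt_id v).const_mul t
      simpa using this.exp
    have h5 : HasDerivAt (fun w => Real.exp (-(t*w))) (Real.exp (-(t*v)) * (-t)) v := by
      have : HasDerivAt (fun w : ℝ => -(t * w)) (-(t * 1)) v :=
        ((hasDerivAt_id v).const_mul t).neg
      simpa using this.exp
    exact (h3.sub h4).sub h5
  have hmono : MonotoneOn g (Set.Ici (0:ℝ)) := by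
    apply monotoneOn_of_deriv_nonneg (convex_Ici 0)
    · exact fun v _ => ((hderiv v).differentiableAt.continuousAt).continuousWithinAt
    · exact fun v _ => (hderiv v).differentiableAt.differentiableWithinAt
    · intro v hv
      rw [interior_Ici] at hv
      rw [(hderiv v).deriv]
      have hk := kt_key t ht v (le_of_lt hv)
      have htp : (0:ℝ) < t := by linarith
      nlinarith [hk, htp]
  have h0 : g 0 = (2:ℝ) ^ t - 2 := by
    simp [hg, Real.exp_zero]
    ring_nf
  have := hmono (Set.self_mem_Ici) hu hu
  rw [h0] at this
  simp only [hg] at this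
  linarith

private lemma kt_norm (t : ℝ) (ht : 2 ≤ t) (a b : ℝ) (ha : 0 < a) (hb : 0 < b)
    (hab : a * b = 1) (hba : b ≤ a) :
    a ^ t + b ^ t + ((2:ℝ) ^ t - 2) ≤ (a + b) ^ t := by
  have ha1 : 1 ≤ a := by
    nlinarith
  set u := Real.log a with hu
  have hu0 : 0 ≤ u := Real.log_nonneg ha1
  have hea : Real.exp u = a := Real.exp_log ha
  have heb : Real.exp (-u) = b := by
    rw [Real.exp_neg, hea]
    field_simp
    linarith [hab]
  have hat : a ^ t = Real.exp (t*u) := by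
    rw [← hea, ← Real.exp_mul, mul_comm]
  have hbt : b ^ t = Real.exp (-(t*u)) := by
    rw [← heb, ← Real.exp_mul]
    congr 1
    ring
  have := kt_cosh t ht u hu0
  rw [hea, heb] at this
  rw [hat, hbt]
  linarith

private lemma kt_norm' (t : ℝ) (ht : 2 ≤ t) (a b : ℝ) (ha : 0 < a) (hb : 0 < b)
    (hab : a * b = 1) :
    a ^ t + b ^ t + ((2:ℝ) ^ t - 2) ≤ (a + b) ^ t := by
  rcases le_total b a with h | h
  · exact kt_norm t ht a b ha hb hab h
  · have := kt_norm t ht b a hb ha (by linarith [hab, mul_comm a b] ) h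
    · rw [add_comm b a] at this
      linarith

theorem kane_tao_elementary_inequality (k : ℕ) (hk : 2 ≤ k) (t : ℝ)
    (ht : t = Real.logb 2 (2 * (k : ℝ) + 2)) (x y : ℝ) (hx : 0 ≤ x) (hy : 0 ≤ y) :
    x ^ t + y ^ t + 2 * (k : ℝ) * x ^ (t / 2) * y ^ (t / 2) ≤ (x + y) ^ t := by
  have hkR : (2:ℝ) ≤ (k:ℝ) := by exact_mod_cast hk
  have hkpos : (0:ℝ) < 2 * (k:ℝ) + 2 := by linarith
  have h2t : (2:ℝ) ^ t = 2 * (k:ℝ) + 2 := by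
    rw [ht]
    exact Real.rpow_logb (by norm_num) (by norm_num) hkpos
  have h22 : (2:ℝ) ^ (2:ℝ) = 4 := by
    rw [show (2:ℝ) = ((2:ℕ):ℝ) from by norm_num]
    rw [Real.rpow_natCast]
    norm_num
  have ht2 : (2:ℝ) ≤ t := by
    have h4 : (2:ℝ) ^ (2:ℝ) ≤ (2:ℝ) ^ t := by
      rw [h2t, h22]; linarith
    exact (Real.rpow_le_rpow_left_iff one_lt_two).mp h4
  have htne : t ≠ 0 := by linarith
  have htdne : t / 2 ≠ 0 := by
    intro h
    have : t = 0 := by linarith [h]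
    exact htne this
  rcases eq_or_lt_of_le hx with hx0 | hx0
  · simp [← hx0, Real.zero_rpow htne, Real.zero_rpow htdne]
  rcases eq_or_lt_of_le hy with hy0 | hy0
  · simp [← hy0, Real.zero_rpow htne, Real.zero_rpow htdne]
  set m := Real.sqrt (x*y) with hmdef
  have hm : 0 < m := Real.sqrt_pos.mpr (by positivity)
  have hm2 : m * m = x * y := Real.mul_self_sqrt (by positivity)
  set a := x / m with hadef
  set b := y / m with hbdef
  have ha : 0 < a := by positivity
  have hb : 0 < b := by positivity
  have hab : a * b = 1 := by
    rw [hadef, hbdef]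
    field_simp
    linarith [hm2]
  have hnorm : a ^ t + b ^ t + 2 * (k:ℝ) ≤ (a + b) ^ t := by
    have h := kt_norm' t ht2 a b ha hb hab
    rw [h2t] at h
    linarith
  have hmt : (0:ℝ) ≤ m ^ t := Real.rpow_nonneg hm.le t
  have hmul := mul_le_mul_of_nonneg_left hnorm hmt
  have hma : m ^ t * a ^ t = x ^ t := by
    rw [← Real.mul_rpow hm.le ha.le]
    congr 1
    rw [hadef]
    field_simp
  have hmb : m ^ t * b ^ t = y ^ t := by
    rw [← Real.mul_rpow hm.le hb.le]
    congr 1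
    rw [hbdef]
    field_simp
  have hmab : m ^ t * (a + b) ^ t = (x + y) ^ t := by
    rw [← Real.mul_rpow hm.le (by positivity)]
    congr 1
    rw [hadef, hbdef]
    field_simp
  have hmhalf : m ^ t = x ^ (t/2) * y ^ (t/2) := by
    rw [← Real.mul_rpow hx0.le hy0.le]
    rw [hmdef, Real.sqrt_eq_rpow, ← Real.rpow_mul (by positivity)]
    congr 1
    ring
  calc x ^ t + y ^ t + 2 * (k:ℝ) * x ^ (t/2) * y ^ (t/2)
      = m ^ t * (a ^ t + b ^ t + 2 * (k:ℝ)) := by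
        linear_combination -hma - hmb - 2*(k:ℝ)*hmhalf
    _ ≤ m ^ t * (a + b) ^ t := hmul
    _ = (x + y) ^ t := hmab
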